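/- For 1 ≤ k < n, the function f(λ) = (n/k)·[σ₁(λ) − (k+1)·σ_{k+1}(λ)/σ_k(λ)] is convex on the positive cone Γ₊ = {λ ∈ ℝⁿ : λᵢ > 0 for all i}. -/

import Mathlib

/-- The k-th elementary symmetric polynomial of `lam : Fin n → ℝ`. -/
noncomputable def sigmaE (n k : ℕ) (lam : Fin n → ℝ) : ℝ :=
  ∑ s ∈ Finset.powersetCard k (Finset.univ : Finset (Fin n)), ∏ i ∈ s, lam i

open Finset

noncomputable def esym (n k : ℕ) (s : Finset (Fin n)) (u : Fin n → ℝ) : ℝ :=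
  ∑ t ∈ s.powersetCard k, ∏ i ∈ t, u i

variable {n : ℕ}

lemma esym_zero (s : Finset (Fin n)) (u : Fin n → ℝ) : esym n 0 s u = 1 := by
  simp [esym]

lemma esym_one (s : Finset (Fin n)) (u : Fin n → ℝ) : esym n 1 s u = ∑ i ∈ s, u i := by
  simp [esym, Finset.powersetCard_one, Finset.sum_map]

lemma esym_pos {k : ℕ} {s : Finset (Fin n)} {u : Fin n → ℝ} (hk : k ≤ s.card)
    (hu : ∀ i ∈ s, 0 < u i) : 0 < esym n k s u := by
  apply Finset.sum_pos
  · intro t ht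
    rw [Finset.mem_powersetCard] at ht
    exact Finset.prod_pos fun i hi => hu i (ht.1 hi)
  · exact Finset.powersetCard_nonempty.2 hk

lemma esym_insert {k : ℕ} {t : Finset (Fin n)} {i : Fin n} (hi : i ∉ t) (u : Fin n → ℝ) :
    esym n (k+1) (insert i t) u = esym n (k+1) t u + u i * esym n k (t) u := by
  rw [esym, Finset.powersetCard_succ_insert hi, Finset.sum_union]
  · congr 1
    rw [Finset.sum_image]
    · rw [esym, Finset.mul_sum]
      apply Finset.sum_congr rfl
      intro a ha
      rw [Finset.mem_powersetCard] at ha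
      rw [Finset.prod_insert (fun h => hi (ha.1 h))]
    · intro a ha b hb hins
      rw [Finset.mem_coe, Finset.mem_powersetCard] at ha hb
      have hia : i ∉ a := fun h => hi (ha.1 h)
      have hib : i ∉ b := fun h => hi (hb.1 h)
      have := congrArg (Finset.erase · i) hins
      simpa [Finset.erase_insert hia, Finset.erase_insert hib] using this
  · rw [Finset.disjoint_right]
    intro a ha ha'
    rw [Finset.mem_image] at ha
    rw [Finset.mem_powersetCard] at ha'
    obtain ⟨b, hb, rfl⟩ := ha
    exact hi (ha'.1 (Finset.mem_insert_self i b))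

lemma esym_erase {k : ℕ} {s : Finset (Fin n)} {i : Fin n} (hi : i ∈ s) (u : Fin n → ℝ) :
    esym n (k+1) s u = esym n (k+1) (s.erase i) u + u i * esym n k (s.erase i) u := by
  nth_rewrite 1 [← Finset.insert_erase hi]
  exact esym_insert (Finset.notMem_erase i s) u

lemma esym_count {k : ℕ} (s : Finset (Fin n)) (u : Fin n → ℝ) :
    ((k:ℝ)+1) * esym n (k+1) s u = ∑ i ∈ s, u i * esym n k (s.erase i) u := by
  have lhs : ((k:ℝ)+1) * esym n (k+1) s u
      = ∑ t ∈ s.powersetCard (k+1), ∑ i ∈ t, ∏ j ∈ t, u j := by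
    rw [esym, Finset.mul_sum]
    apply Finset.sum_congr rfl
    intro t ht
    rw [Finset.mem_powersetCard] at ht
    rw [Finset.sum_const, ht.2, nsmul_eq_mul]
    push_cast
    ring
  have rhs : ∑ i ∈ s, u i * esym n k (s.erase i) u
      = ∑ i ∈ s, ∑ t ∈ (s.erase i).powersetCard k, u i * ∏ j ∈ t, u j := by
    apply Finset.sum_congr rfl
    intro i hi
    rw [esym, Finset.mul_sum]
  rw [lhs, rhs, Finset.sum_sigma', Finset.sum_sigma']
  apply Finset.sum_nbij' (i := fun p => ⟨p.2, p.1.erase p.2⟩)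
    (j := fun p => ⟨insert p.1 p.2, p.1⟩)
  · intro p hp
    rw [Finset.mem_sigma] at hp ⊢
    rw [Finset.mem_powersetCard] at hp
    obtain ⟨⟨hsub, hcard⟩, hmem⟩ := hp
    refine ⟨hsub hmem, ?_⟩
    rw [Finset.mem_powersetCard]
    constructor
    · intro x hx
      rw [Finset.mem_erase] at hx ⊢
      exact ⟨hx.1, hsub hx.2⟩
    · rw [Finset.card_erase_of_mem hmem, hcard]
      omega
  · intro p hp
    rw [Finset.mem_sigma] at hp ⊢
    rw [Finset.mem_powersetCard] at hp
    obtain ⟨hmem, hsub, hcard⟩ := hp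
    have hinotin : p.1 ∉ p.2 := fun h => (Finset.notMem_erase p.1 s) (hsub h)
    constructor
    · rw [Finset.mem_powersetCard]
      constructor
      · intro x hx
        rcases Finset.mem_insert.1 hx with h | h
        · exact h ▸ hmem
        · exact Finset.mem_of_mem_erase (hsub h)
      · rw [Finset.card_insert_of_notMem hinotin, hcard]
    · exact Finset.mem_insert_self _ _
  · intro p hp
    rw [Finset.mem_sigma] at hp
    exact Sigma.ext (Finset.insert_erase hp.2) HEq.rfl
  · intro p hp
    rw [Finset.mem_sigma, Finset.mem_powersetCard] at hp
    have hinotin : p.1 ∉ p.2 := fun h => (Finset.notMem_erase p.1 s) (hp.2.1 h)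
    exact Sigma.ext rfl (heq_of_eq (Finset.erase_insert hinotin))
  · intro p hp
    rw [Finset.mem_sigma, Finset.mem_powersetCard] at hp
    exact (Finset.mul_prod_erase p.1 u hp.2).symm

lemma convex_posCone : Convex ℝ {u : Fin n → ℝ | ∀ i, 0 < u i} := by
  intro x hx y hy a b ha hb hab
  intro i
  have hxi := hx i
  have hyi := hy i
  show 0 < a * x i + b * y i
  rcases eq_or_lt_of_le ha with h | h
  · have hb1 : b = 1 := by linarith
    simp [← h, hb1, hyi]
  · have h1 : 0 < a * x i := mul_pos h hxi
    have h2 : 0 ≤ b * y i := mul_nonneg hb hyi.le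
    linarith

lemma concaveOn_congr_set {S : Set (Fin n → ℝ)} {f g : (Fin n → ℝ) → ℝ}
    (hf : ConcaveOn ℝ S f) (h : Set.EqOn f g S) : ConcaveOn ℝ S g := by
  refine ⟨hf.1, fun x hx y hy a b ha hb hab => ?_⟩
  rw [← h hx, ← h hy, ← h (hf.1 hx hy ha hb hab)]
  exact hf.2 hx hy ha hb hab

lemma convexOn_congr_set {S : Set (Fin n → ℝ)} {f g : (Fin n → ℝ) → ℝ}
    (hf : ConvexOn ℝ S f) (h : Set.EqOn f g S) : ConvexOn ℝ S g := by
  refine ⟨hf.1, fun x hx y hy a b ha hb hab => ?_⟩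
  rw [← h hx, ← h hy, ← h (hf.1 hx hy ha hb hab)]
  exact hf.2 hx hy ha hb hab

lemma concaveOn_sum_coords (s : Finset (Fin n)) :
    ConcaveOn ℝ {u : Fin n → ℝ | ∀ i, 0 < u i} (fun u => ∑ i ∈ s, u i) := by
  refine ⟨convex_posCone, fun x hx y hy a b ha hb hab => ?_⟩
  simp only [smul_eq_mul, Pi.add_apply, Pi.smul_apply, smul_eq_mul]
  rw [Finset.mul_sum, Finset.mul_sum, ← Finset.sum_add_distrib]

lemma convexOn_sum_coords (s : Finset (Fin n)) :
    ConvexOn ℝ {u : Fin n → ℝ | ∀ i, 0 < u i} (fun u => ∑ i ∈ s, u i) := by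
  refine ⟨convex_posCone, fun x hx y hy a b ha hb hab => ?_⟩
  simp only [smul_eq_mul, Pi.add_apply, Pi.smul_apply, smul_eq_mul]
  rw [Finset.mul_sum, Finset.mul_sum, ← Finset.sum_add_distrib]

lemma concaveOn_finset_sum {ι : Type*} (t : Finset ι) {S : Set (Fin n → ℝ)} (hS : Convex ℝ S)
    (f : ι → (Fin n → ℝ) → ℝ) (h : ∀ i ∈ t, ConcaveOn ℝ S (f i)) :
    ConcaveOn ℝ S (fun u => ∑ i ∈ t, f i u) := by
  classical
  induction t using Finset.induction with
  | empty => simpa using concaveOn_const 0 hS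
  | @insert a t ha ih =>
    simp only [Finset.sum_insert ha]
    exact (h a (Finset.mem_insert_self a t)).add
      (ih fun i hi => h i (Finset.mem_insert_of_mem hi))

lemma phi_concave (i : Fin n) {g : (Fin n → ℝ) → ℝ}
    (hg : ConcaveOn ℝ {u : Fin n → ℝ | ∀ j, 0 < u j} g)
    (hpos : ∀ u ∈ {u : Fin n → ℝ | ∀ j, 0 < u j}, 0 < g u) :
    ConcaveOn ℝ {u : Fin n → ℝ | ∀ j, 0 < u j} (fun u => u i * g u / (u i + g u)) := by
  refine ⟨convex_posCone, fun x hx y hy a b ha hb hab => ?_⟩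
  have hb' : b = 1 - a := by linarith
  subst hb'
  set p := x i with hp_def
  set q := g x with hq_def
  set r := y i with hr_def
  set s' := g y with hs_def
  have hp : 0 < p := hx i
  have hq : 0 < q := hpos x hx
  have hr : 0 < r := hy i
  have hs : 0 < s' := hpos y hy
  have hw : a • x + (1-a) • y ∈ {u : Fin n → ℝ | ∀ j, 0 < u j} :=
    convex_posCone hx hy ha hb (by ring)
  have hwi : (a • x + (1-a) • y) i = a * p + (1-a) * r := by
    simp [Pi.add_apply, Pi.smul_apply, smul_eq_mul]
    rw [hp_def, hr_def]
  have hG : a * q + (1-a) * s' ≤ g (a • x + (1-a) • y) := by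
    have := hg.2 hx hy ha hb (by ring)
    simpa [smul_eq_mul] using this
  have hGw : 0 < g (a • x + (1-a) • y) := hpos _ hw
  have hA : 0 < a * p + (1-a) * r := by
    rcases eq_or_lt_of_le ha with h | h
    · have : a * p + (1-a) * r = r := by rw [← h]; ring
      linarith
    · nlinarith [mul_pos h hp, mul_nonneg (by linarith : (0:ℝ) ≤ 1-a) hr.le]
  have hG0 : 0 < a * q + (1-a) * s' := by
    rcases eq_or_lt_of_le ha with h | h
    · have : a * q + (1-a) * s' = s' := by rw [← h]; ring
      linarith
    · nlinarith [mul_pos h hq, mul_nonneg (by linarith : (0:ℝ) ≤ 1-a) hs.le]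
  set G := g (a • x + (1-a) • y) with hG_def
  set A := a * p + (1-a) * r with hA_def
  set G0 := a * q + (1-a) * s' with hG0_def
  -- step 1: monotonicity in second arg
  have step1 : A * G0 / (A + G0) ≤ A * G / (A + G) := by
    rw [div_le_div_iff₀ (by linarith) (by linarith)]
    nlinarith [mul_nonneg (mul_pos hA hA).le (sub_nonneg.2 hG)]
  -- step 2: joint concavity
  have step2 : a * (p * q / (p + q)) + (1-a) * (r * s' / (r + s')) ≤ A * G0 / (A + G0) := by
    have hcomb : a * (p * q / (p + q)) + (1-a) * (r * s' / (r + s'))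
        = (a * (p * q) * (r + s') + (1-a) * (r * s') * (p + q)) / ((p + q) * (r + s')) := by
      field_simp
    rw [hcomb, div_le_div_iff₀ (by positivity) (by linarith)]
    have key : A * G0 * ((p + q) * (r + s'))
        - (a * (p * q) * (r + s') + (1-a) * (r * s') * (p + q)) * (A + G0)
        = a * (1-a) * (p * s' - q * r)^2 := by
      rw [hA_def, hG0_def]; ring
    nlinarith [mul_nonneg (mul_nonneg ha (by linarith : (0:ℝ) ≤ 1-a)) (sq_nonneg (p * s' - q * r))]
  calc a • (x i * g x / (x i + g x)) + (1-a) • (y i * g y / (y i + g y))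
      = a * (p * q / (p + q)) + (1-a) * (r * s' / (r + s')) := by simp [smul_eq_mul]; rw [hp_def, hq_def, hr_def, hs_def]
    _ ≤ A * G0 / (A + G0) := step2
    _ ≤ A * G / (A + G) := step1
    _ = (a • x + (1-a) • y) i * G / ((a • x + (1-a) • y) i + G) := by rw [hwi]

lemma ratio_concave : ∀ (m : ℕ) (s : Finset (Fin n)), m + 1 ≤ s.card →
    ConcaveOn ℝ {u : Fin n → ℝ | ∀ j, 0 < u j}
      (fun u => esym n (m+1) s u / esym n m s u) := by
  intro m
  induction m with
  | zero =>
    intro s hs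
    have heq : (fun u : Fin n → ℝ => esym n 1 s u / esym n 0 s u)
        = fun u => ∑ i ∈ s, u i := by
      funext u
      rw [esym_one, esym_zero, div_one]
    rw [heq]
    exact concaveOn_sum_coords s
  | succ m ih =>
    intro s hs
    have hpos_cone : ∀ u ∈ {u : Fin n → ℝ | ∀ j, 0 < u j}, ∀ i ∈ s, True := fun _ _ _ _ => trivial
    -- the auxiliary concave function
    have hcard_erase : ∀ i ∈ s, m + 1 ≤ (s.erase i).card := by
      intro i hi
      rw [Finset.card_erase_of_mem hi]
      omega
    have hterm : ∀ i ∈ s, ConcaveOn ℝ {u : Fin n → ℝ | ∀ j, 0 < u j}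
        (fun u => u i * (esym n (m+1) (s.erase i) u / esym n m (s.erase i) u)
          / (u i + (esym n (m+1) (s.erase i) u / esym n m (s.erase i) u))) := by
      intro i hi
      apply phi_concave i (ih (s.erase i) (hcard_erase i hi))
      intro u hu
      exact div_pos (esym_pos (by have := hcard_erase i hi; omega) (fun j _ => hu j))
        (esym_pos (by have := hcard_erase i hi; omega) (fun j _ => hu j))
    have hsum : ConcaveOn ℝ {u : Fin n → ℝ | ∀ j, 0 < u j}
        (fun u => ∑ i ∈ s, (u i * (esym n (m+1) (s.erase i) u / esym n m (s.erase i) u)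
          / (u i + (esym n (m+1) (s.erase i) u / esym n m (s.erase i) u)))) :=
      concaveOn_finset_sum s convex_posCone _ hterm
    have hsmul : ConcaveOn ℝ {u : Fin n → ℝ | ∀ j, 0 < u j}
        (fun u => ((m:ℝ)+2)⁻¹ * ∑ i ∈ s, (u i * (esym n (m+1) (s.erase i) u / esym n m (s.erase i) u)
          / (u i + (esym n (m+1) (s.erase i) u / esym n m (s.erase i) u)))) := by
      have := hsum.smul (c := ((m:ℝ)+2)⁻¹) (by positivity)
      simpa [smul_eq_mul] using this
    apply concaveOn_congr_set hsmul
    intro u hu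
    have hupos : ∀ j ∈ s, 0 < u j := fun j _ => hu j
    have hE1 : 0 < esym n (m+1) s u := esym_pos (by omega) hupos
    have hterm_eq : ∀ i ∈ s,
        (u i * (esym n (m+1) (s.erase i) u / esym n m (s.erase i) u)
          / (u i + (esym n (m+1) (s.erase i) u / esym n m (s.erase i) u)))
        = u i * esym n (m+1) (s.erase i) u / esym n (m+1) s u := by
      intro i hi
      have hai : 0 < esym n (m+1) (s.erase i) u := by
        apply esym_pos (hcard_erase i hi)
        intro j hj
        exact hu j
      have hbi : 0 < esym n m (s.erase i) u := by
        apply esym_pos (by have := hcard_erase i hi; omega)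
        intro j hj
        exact hu j
      have hui : 0 < u i := hu i
      have hdecomp : esym n (m+1) s u
          = esym n (m+1) (s.erase i) u + u i * esym n m (s.erase i) u := esym_erase hi u
      rw [hdecomp]
      have hden : 0 < u i + esym n (m+1) (s.erase i) u / esym n m (s.erase i) u := by positivity
      field_simp
      ring
    show ((m:ℝ)+2)⁻¹ * ∑ i ∈ s, _ = _
    rw [Finset.sum_congr rfl hterm_eq, ← Finset.sum_div]
    have hcount : ∑ i ∈ s, u i * esym n (m+1) (s.erase i) u
        = ((m:ℝ)+2) * esym n (m+2) s u := by
      have := esym_count (n := n) (k := m+1) s u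
      push_cast at this ⊢
      linarith [this]
    rw [hcount]
    have h2 : ((m:ℝ)+2) ≠ 0 := by positivity
    field_simp

lemma sigmaE_eq (n k : ℕ) (lam : Fin n → ℝ) : sigmaE n k lam = esym n k Finset.univ lam := rfl

theorem stmt7 (n k : ℕ) (hk1 : 1 ≤ k) (hkn : k < n) :
    ConvexOn ℝ {lam : Fin n → ℝ | ∀ i, 0 < lam i}
      (fun lam => ((n : ℝ) / k) *
        (sigmaE n 1 lam - (k + 1 : ℝ) * sigmaE n (k + 1) lam / sigmaE n k lam)) := by
  have hcard : (Finset.univ : Finset (Fin n)).card = n := by simp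
  have hconc := ratio_concave k (Finset.univ : Finset (Fin n)) (by omega)
  have h2 : ConcaveOn ℝ {u : Fin n → ℝ | ∀ j, 0 < u j}
      (fun lam => (k + 1 : ℝ) * sigmaE n (k + 1) lam / sigmaE n k lam) := by
    have h := hconc.smul (c := (k + 1 : ℝ)) (by positivity)
    apply concaveOn_congr_set h
    intro u hu
    simp only [smul_eq_mul, sigmaE_eq]
    show (k + 1 : ℝ) * (esym n (k+1) Finset.univ u / esym n k Finset.univ u) = _
    rw [mul_div_assoc]
  have h1 : ConvexOn ℝ {u : Fin n → ℝ | ∀ j, 0 < u j} (fun lam => sigmaE n 1 lam) := by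
    apply convexOn_congr_set (convexOn_sum_coords Finset.univ)
    intro u hu
    show ∑ i : Fin n, u i = sigmaE n 1 u
    rw [sigmaE_eq, esym_one]
  have h3 := h1.sub h2
  have h4 := h3.smul (c := (n : ℝ)/k) (by positivity)
  apply convexOn_congr_set h4
  intro u hu
  simp [smul_eq_mul]
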